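/- For each k ∈ {0, 1, …, n−1}, each equivalence class T of ∼ in S contains exactly one k-skeletal area vector, namely, the unique element g of T of minimum area among those satisfying pos(g) > k. -/

import Mathlib

/-- An area vector: `g i.succ ≤ g i.castSucc + m` for all consecutive indices. -/
def IsAreaVec {n : ℕ} (m : ℝ) (g : Fin (n + 1) → ℝ) : Prop :=
  ∀ i : Fin n, g i.succ ≤ g i.castSucc + m

/-- The cycling operator `C(g₀,…,g_{n-1}) = (g₁,…,g_{n-1}, g₀ - c)`. -/
def cyc {n : ℕ} (c : ℝ) (g : Fin (n + 1) → ℝ) : Fin (n + 1) → ℝ :=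
  fun i => if h : (i : ℕ) + 1 < n + 1 then g ⟨(i : ℕ) + 1, h⟩ else g 0 - c

/-- The inverse cycling operator. -/
def cycInv {n : ℕ} (c : ℝ) (g : Fin (n + 1) → ℝ) : Fin (n + 1) → ℝ :=
  fun i => if 0 < (i : ℕ) then
      g ⟨(i : ℕ) - 1, Nat.lt_of_le_of_lt (Nat.sub_le _ _) i.isLt⟩
    else g (Fin.last n) + c

/-- Integer iterates `C^j` of the cycling operator. -/
def cycIter {n : ℕ} (c : ℝ) (j : ℤ) (g : Fin (n + 1) → ℝ) : Fin (n + 1) → ℝ :=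
  if 0 ≤ j then (cyc c)^[j.toNat] g else (cycInv c)^[(-j).toNat] g

/-- Membership in the set `S`: an area vector with values in `G`, `g 0 ≤ c`,
and last entry positive. -/
def MemS {n : ℕ} (G : AddSubgroup ℝ) (c m : ℝ) (g : Fin (n + 1) → ℝ) : Prop :=
  (∀ i, g i ∈ G) ∧ IsAreaVec m g ∧ g 0 ≤ c ∧ 0 < g (Fin.last n)

/-- `posStat g` is the largest `ℓ` such that the last `ℓ` entries of `g` are positive. -/
noncomputable def posStat {n : ℕ} (g : Fin (n + 1) → ℝ) : ℕ :=
  sSup {ℓ : ℕ | ℓ ≤ n + 1 ∧ ∀ i : Fin (n + 1), n + 1 - ℓ ≤ (i : ℕ) → 0 < g i}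

/-- `g` is a `k`-skeletal area vector: (A0) `g 0 ≤ c`; (A1) the last `k+1` entries
are strictly positive; (A2) no `k+1` consecutive entries all strictly exceed `c`. -/
def IsSkeletal {n : ℕ} (c m : ℝ) (k : ℕ) (g : Fin (n + 1) → ℝ) : Prop :=
  IsAreaVec m g ∧ g 0 ≤ c ∧
  (∀ i : Fin (n + 1), n - k ≤ (i : ℕ) → 0 < g i) ∧
  ¬ ∃ s : ℕ, s + k ≤ n ∧ ∀ j : Fin (n + 1), s ≤ (j : ℕ) → (j : ℕ) ≤ s + k → c < g j

namespace Stmt7Aux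

variable {n : ℕ}

/-- The bi-infinite extension of an area vector. -/
noncomputable def fext (c : ℝ) (g : Fin (n + 1) → ℝ) (t : ℤ) : ℝ :=
  g ⟨(t % ((n : ℤ) + 1)).toNat, by
    have h1 : 0 ≤ t % ((n : ℤ) + 1) := Int.emod_nonneg t (by positivity)
    have h2 : t % ((n : ℤ) + 1) < (n : ℤ) + 1 := Int.emod_lt_of_pos t (by positivity)
    omega⟩ - ((t / ((n : ℤ) + 1) : ℤ) : ℝ) * c

theorem fext_coe (c : ℝ) (g : Fin (n + 1) → ℝ) (i : Fin (n + 1)) :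
    fext c g (i : ℤ) = g i := by
  have h1 : ((i : ℤ)) % ((n : ℤ) + 1) = (i : ℤ) :=
    Int.emod_eq_of_lt (by positivity) (by exact_mod_cast i.isLt)
  have h2 : ((i : ℤ)) / ((n : ℤ) + 1) = 0 :=
    Int.ediv_eq_zero_of_lt (by positivity) (by exact_mod_cast i.isLt)
  simp only [fext, h1, h2, Int.cast_zero, zero_mul, sub_zero]
  exact congrArg g (Fin.ext (by simp))

theorem fext_coe' (c : ℝ) (g : Fin (n + 1) → ℝ) (t : ℤ) (h0 : 0 ≤ t) (hn : t ≤ n) :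
    fext c g t = g ⟨t.toNat, by omega⟩ := by
  rw [← fext_coe c g ⟨t.toNat, by omega⟩]
  congr 1
  simp [Int.toNat_of_nonneg h0]

theorem fext_period (c : ℝ) (g : Fin (n + 1) → ℝ) (t : ℤ) :
    fext c g (t + ((n : ℤ) + 1)) = fext c g t - c := by
  have h1 : (t + ((n : ℤ) + 1)) % ((n : ℤ) + 1) = t % ((n : ℤ) + 1) := by
    have := Int.add_mul_emod_self_left (a := t) (b := ((n : ℤ) + 1)) (c := 1)
    simpa using this
  have h2 : (t + ((n : ℤ) + 1)) / ((n : ℤ) + 1) = t / ((n : ℤ) + 1) + 1 := by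
    have := Int.add_mul_ediv_right t 1 (c := (n : ℤ) + 1) (by positivity)
    simpa using this
  simp only [fext, h1, h2, Int.cast_add, Int.cast_one]
  ring

theorem fext_sub_period (c : ℝ) (g : Fin (n + 1) → ℝ) (t : ℤ) :
    fext c g (t - ((n : ℤ) + 1)) = fext c g t + c := by
  have := fext_period c g (t - ((n : ℤ) + 1))
  simp at this
  linarith

theorem fext_shift (c : ℝ) (g : Fin (n + 1) → ℝ) (q t : ℤ) :
    fext c g (t + q * ((n : ℤ) + 1)) = fext c g t - q * c := by
  induction q using Int.induction_on with
  | zero => simp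
  | succ p ih =>
      have e : t + ((p : ℤ) + 1) * ((n : ℤ) + 1) = (t + p * ((n:ℤ)+1)) + ((n:ℤ)+1) := by ring
      rw [e, fext_period, ih]
      push_cast
      ring
  | pred p ih =>
      have e : t + (-(p : ℤ) - 1) * ((n : ℤ) + 1) = (t + (-(p:ℤ)) * ((n:ℤ)+1)) - ((n:ℤ)+1) := by
        ring
      rw [e, fext_sub_period, ih]
      push_cast
      ring

theorem fext_mem (G : AddSubgroup ℝ) (c : ℝ) (hcG : c ∈ G) (g : Fin (n + 1) → ℝ)
    (hG : ∀ i, g i ∈ G) (t : ℤ) : fext c g t ∈ G := by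
  refine G.sub_mem (hG _) ?_
  simpa [zsmul_eq_mul] using G.zsmul_mem hcG (t / ((n : ℤ) + 1))

theorem exists_decomp (t : ℤ) : ∃ (r : Fin (n + 1)) (q : ℤ),
    t = (r : ℤ) + q * ((n : ℤ) + 1) := by
  have h1 : 0 ≤ t % ((n : ℤ) + 1) := Int.emod_nonneg t (by positivity)
  have h2 : t % ((n : ℤ) + 1) < (n : ℤ) + 1 := Int.emod_lt_of_pos t (by positivity)
  refine ⟨⟨(t % ((n : ℤ) + 1)).toNat, by omega⟩, t / ((n : ℤ) + 1), ?_⟩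
  have h3 := Int.emod_add_mul_ediv t ((n : ℤ) + 1)
  have h4 : (((t % ((n : ℤ) + 1)).toNat : ℕ) : ℤ) = t % ((n : ℤ) + 1) :=
    Int.toNat_of_nonneg h1
  simp only [Fin.val_mk]
  rw [h4]
  linarith [h3]

theorem areaVec_step {m : ℝ} {g : Fin (n + 1) → ℝ} (hA : IsAreaVec m g)
    (a b : Fin (n + 1)) (h : (b : ℕ) = (a : ℕ) + 1) : g b ≤ g a + m := by
  have ha : (a : ℕ) < n := by have := b.isLt; omega
  have e1 : Fin.succ ⟨(a : ℕ), ha⟩ = b := Fin.ext (by simp [h])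
  have e2 : Fin.castSucc ⟨(a : ℕ), ha⟩ = a := Fin.ext (by simp)
  have h3 := hA ⟨(a : ℕ), ha⟩
  rw [e1, e2] at h3
  exact h3

theorem fext_step (G : AddSubgroup ℝ) (c m : ℝ) (hc : 0 < c) (hm : 0 ≤ m)
    (g : Fin (n + 1) → ℝ) (hg : MemS G c m g) (t : ℤ) :
    fext c g (t + 1) ≤ fext c g t + m := by
  obtain ⟨r, q, rfl⟩ := exists_decomp (n := n) t
  have e1 : (r : ℤ) + q * ((n : ℤ) + 1) + 1 = ((r : ℤ) + 1) + q * ((n : ℤ) + 1) := by ring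
  rw [e1, fext_shift, fext_shift]
  have key : fext c g ((r : ℤ) + 1) ≤ fext c g (r : ℤ) + m := by
    rcases lt_or_eq_of_le (Nat.lt_succ_iff.mp r.isLt) with hr | hr
    · have h1 : fext c g ((r : ℤ) + 1) = g ⟨(r : ℕ) + 1, by omega⟩ := by
        rw [fext_coe' c g _ (by positivity) (by exact_mod_cast hr)]
        congr 1
      rw [h1, fext_coe c g r]
      exact areaVec_step hg.2.1 r _ rfl
    · have h1 : (r : ℤ) + 1 = (((0 : Fin (n+1)) : ℤ)) + ((n : ℤ) + 1) := by
        simp [← hr]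
      rw [h1, fext_period, fext_coe, fext_coe]
      have h2 : g r = g (Fin.last n) := by
        congr 1
        exact Fin.ext (by simpa using hr)
      rw [h2]
      have := hg.2.2.1
      have := hg.2.2.2
      simp only [Fin.val_zero] at *
      linarith
  linarith

theorem cyc_shift (c : ℝ) (g : Fin (n + 1) → ℝ) (a : ℤ) :
    cyc c (fun i : Fin (n + 1) => fext c g ((i : ℤ) + a)) =
      fun i : Fin (n + 1) => fext c g ((i : ℤ) + (a + 1)) := by
  funext i
  simp only [cyc]
  split_ifs with h
  · show fext c g (((⟨(i : ℕ) + 1, h⟩ : Fin (n + 1)) : ℤ) + a) = _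
    congr 1
    push_cast
    ring
  · have hi : (i : ℕ) = n := by omega
    show fext c g (((0 : Fin (n + 1)) : ℤ) + a) - c = _
    have e : (i : ℤ) + (a + 1) = (((0 : Fin (n + 1)) : ℤ) + a) + ((n : ℤ) + 1) := by
      simp [hi]
      ring
    rw [e, fext_period]

theorem cycInv_shift (c : ℝ) (g : Fin (n + 1) → ℝ) (a : ℤ) :
    cycInv c (fun i : Fin (n + 1) => fext c g ((i : ℤ) + a)) =
      fun i : Fin (n + 1) => fext c g ((i : ℤ) + (a - 1)) := by
  funext i
  simp only [cycInv]
  split_ifs with h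
  · show fext c g (((⟨(i : ℕ) - 1, Nat.lt_of_le_of_lt (Nat.sub_le _ _) i.isLt⟩ : Fin (n + 1)) : ℤ) + a) = _
    congr 1
    have : (i : ℕ) - 1 + 1 = (i : ℕ) := by omega
    push_cast [this]
    omega
  · have hi : (i : ℕ) = 0 := by omega
    show fext c g (((Fin.last n : Fin (n + 1)) : ℤ) + a) + c = _
    have e : ((Fin.last n : Fin (n + 1)) : ℤ) + a = ((i : ℤ) + (a - 1)) + ((n : ℤ) + 1) := by
      simp [Fin.val_last, hi]
      ring
    rw [e, fext_period]
    ring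

theorem iter_cyc (c : ℝ) (g : Fin (n + 1) → ℝ) (p : ℕ) (a : ℤ) :
    (cyc c)^[p] (fun i : Fin (n + 1) => fext c g ((i : ℤ) + a)) =
      fun i : Fin (n + 1) => fext c g ((i : ℤ) + (a + p)) := by
  induction p generalizing a with
  | zero => simp
  | succ p ih =>
      rw [Function.iterate_succ_apply, cyc_shift, ih]
      funext i
      congr 1
      push_cast
      ring

theorem iter_cycInv (c : ℝ) (g : Fin (n + 1) → ℝ) (p : ℕ) (a : ℤ) :
    (cycInv c)^[p] (fun i : Fin (n + 1) => fext c g ((i : ℤ) + a)) =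
      fun i : Fin (n + 1) => fext c g ((i : ℤ) + (a - p)) := by
  induction p generalizing a with
  | zero => simp
  | succ p ih =>
      rw [Function.iterate_succ_apply, cycInv_shift, ih]
      funext i
      congr 1
      push_cast
      ring

theorem g_eq_shift0 (c : ℝ) (g : Fin (n + 1) → ℝ) :
    (fun i : Fin (n + 1) => fext c g ((i : ℤ) + 0)) = g := by
  funext i
  rw [add_zero, fext_coe]

theorem cycIter_eq (c : ℝ) (g : Fin (n + 1) → ℝ) (j : ℤ) :
    cycIter c j g = fun i : Fin (n + 1) => fext c g ((i : ℤ) + j) := by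
  unfold cycIter
  split_ifs with hj
  · have := iter_cyc c g j.toNat 0
    rw [g_eq_shift0] at this
    rw [this]
    funext i
    congr 1
    rw [Int.toNat_of_nonneg hj]
    ring
  · have := iter_cycInv c g (-j).toNat 0
    rw [g_eq_shift0] at this
    rw [this]
    funext i
    congr 1
    rw [Int.toNat_of_nonneg (by omega)]
    ring

/-- sum of a shifted window -/
noncomputable def sumF (c : ℝ) (g : Fin (n + 1) → ℝ) (j : ℤ) : ℝ :=
  ∑ t ∈ Finset.range (n + 1), fext c g ((t : ℤ) + j)

theorem sum_shift_eq (c : ℝ) (g : Fin (n + 1) → ℝ) (j : ℤ) :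
    ∑ i : Fin (n + 1), fext c g ((i : ℤ) + j) = sumF c g j := by
  rw [sumF, ← Fin.sum_univ_eq_sum_range (fun t : ℕ => fext c g ((t : ℤ) + j))]

theorem sumF_succ (c : ℝ) (g : Fin (n + 1) → ℝ) (j : ℤ) :
    sumF c g (j + 1) = sumF c g j - c := by
  have h1 : sumF c g (j + 1) = ∑ t ∈ Finset.range (n + 1),
      (fun u : ℕ => fext c g ((u : ℤ) + j)) (t + 1) := by
    refine Finset.sum_congr rfl fun t _ => ?_
    simp only []
    congr 1
    push_cast
    ring
  have h2 := Finset.sum_range_succ' (fun u : ℕ => fext c g ((u : ℤ) + j)) (n + 1)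
  have h3 := Finset.sum_range_succ (fun u : ℕ => fext c g ((u : ℤ) + j)) (n + 1)
  have h4 : fext c g (((n + 1 : ℕ) : ℤ) + j) = fext c g (((0 : ℕ) : ℤ) + j) - c := by
    have : ((n + 1 : ℕ) : ℤ) + j = (((0 : ℕ) : ℤ) + j) + ((n : ℤ) + 1) := by push_cast; ring
    rw [this, fext_period]
  rw [h1]
  rw [sumF]
  have := h2.symm.trans h3
  -- this : ∑ range (n+1) f(u+1) + f 0 = ∑ range(n+1) f u + f (n+1)
  have h5 : ∑ t ∈ Finset.range (n + 1), fext c g (((t + 1 : ℕ) : ℤ) + j) =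
      ∑ t ∈ Finset.range (n + 1), fext c g ((t : ℤ) + j) +
        fext c g (((n + 1 : ℕ) : ℤ) + j) - fext c g (((0 : ℕ) : ℤ) + j) := by
    linarith [this]
  rw [h5, h4]
  ring

theorem sumF_shift_nat (c : ℝ) (g : Fin (n + 1) → ℝ) (j : ℤ) (d : ℕ) :
    sumF c g (j + d) = sumF c g j - d * c := by
  induction d with
  | zero => simp
  | succ d ih =>
      have : j + ((d : ℤ) + 1) = (j + d) + 1 := by ring
      push_cast
      rw [this, sumF_succ, ih]
      ring

theorem sumF_le (c : ℝ) (hc : 0 < c) (g : Fin (n + 1) → ℝ) (j j' : ℤ) (h : j' ≤ j) :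
    sumF c g j ≤ sumF c g j' := by
  have hd : j = j' + ((j - j').toNat : ℤ) := by omega
  rw [hd, sumF_shift_nat]
  have : 0 ≤ ((j - j').toNat : ℝ) * c := by positivity
  linarith

theorem posStat_gt (k : ℕ) (hk : k ≤ n) (h : Fin (n + 1) → ℝ)
    (hpos : ∀ i : Fin (n + 1), n - k ≤ (i : ℕ) → 0 < h i) : k < posStat h := by
  have hmem : k + 1 ∈ {ℓ : ℕ | ℓ ≤ n + 1 ∧
      ∀ i : Fin (n + 1), n + 1 - ℓ ≤ (i : ℕ) → 0 < h i} := by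
    refine ⟨by omega, fun i hi => hpos i (by omega)⟩
  have hbdd : BddAbove {ℓ : ℕ | ℓ ≤ n + 1 ∧
      ∀ i : Fin (n + 1), n + 1 - ℓ ≤ (i : ℕ) → 0 < h i} :=
    ⟨n + 1, fun x hx => hx.1⟩
  have := le_csSup hbdd hmem
  have h2 : k + 1 ≤ posStat h := this
  omega

theorem posStat_prop (k : ℕ) (hk : k ≤ n) (h : Fin (n + 1) → ℝ)
    (hgt : k < posStat h) : ∀ i : Fin (n + 1), n - k ≤ (i : ℕ) → 0 < h i := by
  have hne : {ℓ : ℕ | ℓ ≤ n + 1 ∧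
      ∀ i : Fin (n + 1), n + 1 - ℓ ≤ (i : ℕ) → 0 < h i}.Nonempty := by
    refine ⟨0, by omega, fun i hi => ?_⟩
    exfalso
    have := i.isLt
    omega
  have hbdd : BddAbove {ℓ : ℕ | ℓ ≤ n + 1 ∧
      ∀ i : Fin (n + 1), n + 1 - ℓ ≤ (i : ℕ) → 0 < h i} :=
    ⟨n + 1, fun x hx => hx.1⟩
  have hmem := Nat.sSup_mem hne hbdd
  have hsup : k < sSup {ℓ : ℕ | ℓ ≤ n + 1 ∧
      ∀ i : Fin (n + 1), n + 1 - ℓ ≤ (i : ℕ) → 0 < h i} := hgt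
  intro i hi
  exact hmem.2 i (by omega)

end Stmt7Aux

open Stmt7Aux in
theorem stmt7 (n : ℕ) (G : AddSubgroup ℝ) (c m : ℝ)
    (hcG : c ∈ G) (hmG : m ∈ G) (hc : 0 < c) (hm : 0 ≤ m)
    (k : ℕ) (hk : k ≤ n)
    (g : Fin (n + 1) → ℝ) (hg : MemS G c m g) :
    (∃! h : Fin (n + 1) → ℝ,
      MemS G c m h ∧ (∃ j : ℤ, h = cycIter c j g) ∧ IsSkeletal c m k h) ∧
    (∀ h : Fin (n + 1) → ℝ, MemS G c m h → (∃ j : ℤ, h = cycIter c j g) →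
      IsSkeletal c m k h →
        k < posStat h ∧
        ∀ h' : Fin (n + 1) → ℝ, MemS G c m h' → (∃ j : ℤ, h' = cycIter c j g) →
          k < posStat h' → (∑ i, h i) ≤ ∑ i, h' i) := by
  classical
  set P : ℤ → Prop := fun j => ∀ t : ℤ, (n : ℤ) - k ≤ t → t ≤ (n : ℤ) →
    0 < fext c g (t + j) with hPdef
  have hnonempty : (Finset.univ : Finset (Fin (n + 1))).Nonempty := ⟨0, Finset.mem_univ _⟩
  -- P is satisfied somewhere
  have hne : ∃ j, P j := by
    set B := Finset.univ.sup' hnonempty (fun i : Fin (n + 1) => -g i) with hB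
    obtain ⟨q, hq⟩ := exists_nat_gt (B / c)
    have hq' : B < q * c := (div_lt_iff₀ hc).mp hq
    refine ⟨-(q : ℤ) * ((n : ℤ) + 1), ?_⟩
    intro t ht1 ht2
    have ht0 : 0 ≤ t := by omega
    have e : t + (-(q : ℤ) * ((n : ℤ) + 1)) = t + (-(q : ℤ)) * ((n : ℤ) + 1) := by ring
    rw [e, fext_shift, fext_coe' c g t ht0 ht2]
    have hBk : -g ⟨t.toNat, by omega⟩ ≤ B :=
      Finset.le_sup' (fun i : Fin (n + 1) => -g i) (Finset.mem_univ _)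
    push_cast
    linarith
  -- P is bounded above
  have hbdd : ∃ b : ℤ, ∀ z, P z → z ≤ b := by
    set M := Finset.univ.sup' hnonempty g with hM
    obtain ⟨q, hq⟩ := exists_nat_gt (M / c)
    have hq' : M < q * c := (div_lt_iff₀ hc).mp hq
    refine ⟨(q : ℤ) * ((n : ℤ) + 1), fun z hz => ?_⟩
    have h0 := hz (n : ℤ) (by omega) le_rfl
    obtain ⟨r, Q, hdecomp⟩ := exists_decomp (n := n) ((n : ℤ) + z)
    have he : fext c g ((n : ℤ) + z) = g r - (Q : ℝ) * c := by
      rw [hdecomp, fext_shift, fext_coe]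
    rw [he] at h0
    have hgr : g r ≤ M := Finset.le_sup' g (Finset.mem_univ r)
    have hQq : (Q : ℝ) * c < (q : ℝ) * c := by linarith
    have hQ : Q < (q : ℤ) := by
      have := lt_of_mul_lt_mul_right hQq hc.le
      exact_mod_cast this
    have hr : (r : ℤ) ≤ n := by exact_mod_cast Nat.lt_succ_iff.mp r.isLt
    have hQ' : Q * ((n : ℤ) + 1) ≤ ((q : ℤ) - 1) * ((n : ℤ) + 1) :=
      mul_le_mul_of_nonneg_right (by omega) (by positivity)
    have hn0 : (0 : ℤ) ≤ n := Int.natCast_nonneg n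
    linarith
  obtain ⟨J, hPJ, hJmax⟩ := Int.exists_greatest_of_bdd hbdd hne
  -- (A0) for the maximal shift
  have hA0 : fext c g J ≤ c := by
    by_contra hcon
    push_neg at hcon
    have hP1 : P (J + 1) := by
      intro t ht1 ht2
      rcases eq_or_lt_of_le ht2 with he | hlt
      · have e : t + (J + 1) = J + ((n : ℤ) + 1) := by omega
        rw [e, fext_period]
        linarith
      · have e : t + (J + 1) = (t + 1) + J := by ring
        rw [e]
        exact hPJ (t + 1) (by omega) (by omega)
    have := hJmax _ hP1
    omega
  -- (A1) for the maximal shift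
  have hA1 : ∀ i : Fin (n + 1), n - k ≤ (i : ℕ) → 0 < fext c g ((i : ℤ) + J) := by
    intro i hi
    exact hPJ (i : ℤ) (by omega) (by have := i.isLt; omega)
  -- (A2) for the maximal shift
  have hA2 : ¬ ∃ s : ℕ, s + k ≤ n ∧ ∀ i : Fin (n + 1), s ≤ (i : ℕ) → (i : ℕ) ≤ s + k →
      c < fext c g ((i : ℤ) + J) := by
    rintro ⟨s, hs, hbad⟩
    have hP1 : P (J + ((s : ℤ) + k + 1)) := by
      intro t ht1 ht2
      have hu0 : 0 ≤ (s : ℤ) + k + t - n := by omega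
      have hun : (s : ℤ) + k + t - n ≤ (s : ℤ) + k := by omega
      have e : t + (J + ((s : ℤ) + k + 1)) = (((s : ℤ) + k + t - n) + J) + ((n : ℤ) + 1) := by
        ring
      rw [e, fext_period]
      have hcast : ((((s : ℤ) + k + t - n).toNat : ℕ) : ℤ) = (s : ℤ) + k + t - n :=
        Int.toNat_of_nonneg hu0
      have hi := hbad ⟨((s : ℤ) + k + t - n).toNat, by omega⟩ (by
          show s ≤ ((s : ℤ) + k + t - n).toNat
          omega) (by
          show ((s : ℤ) + k + t - n).toNat ≤ s + k
          omega)
      have hi' : c < fext c g ((((s : ℤ) + k + t - n)) + J) := by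
        have : (((⟨((s : ℤ) + k + t - n).toNat, by omega⟩ : Fin (n + 1)) : ℕ) : ℤ) =
            (s : ℤ) + k + t - n := hcast
        rw [this] at hi
        exact hi
      linarith
    have := hJmax _ hP1
    omega
  -- the candidate skeletal vector
  have hAV : IsAreaVec m (fun i : Fin (n + 1) => fext c g ((i : ℤ) + J)) := by
    intro i
    show fext c g (((i.succ : Fin (n + 1)) : ℤ) + J) ≤
      fext c g (((i.castSucc : Fin (n + 1)) : ℤ) + J) + m
    have e : ((i.succ : Fin (n + 1)) : ℤ) + J =
        ((((i.castSucc : Fin (n + 1)) : ℤ) + J)) + 1 := by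
      simp [Fin.val_succ, Fin.coe_castSucc]
      ring
    rw [e]
    exact fext_step G c m hc hm g hg _
  have hzero : fext c g (((0 : Fin (n + 1)) : ℤ) + J) ≤ c := by
    have e : ((0 : Fin (n + 1)) : ℤ) + J = J := by simp
    rw [e]
    exact hA0
  have hlast : 0 < fext c g (((Fin.last n : Fin (n + 1)) : ℤ) + J) := by
    have e : ((Fin.last n : Fin (n + 1)) : ℤ) = (n : ℤ) := by simp [Fin.val_last]
    rw [e]
    exact hPJ (n : ℤ) (by omega) le_rfl
  have hskel : IsSkeletal c m k (fun i : Fin (n + 1) => fext c g ((i : ℤ) + J)) :=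
    ⟨hAV, hzero, hA1, hA2⟩
  have hmemS : MemS G c m (fun i : Fin (n + 1) => fext c g ((i : ℤ) + J)) :=
    ⟨fun i => fext_mem G c hcG g hg.1 _, hAV, hzero, hlast⟩
  -- uniqueness of the skeletal shift
  have huniq : ∀ j : ℤ, IsSkeletal c m k (fun i : Fin (n + 1) => fext c g ((i : ℤ) + j)) →
      j = J := by
    intro j hsk
    obtain ⟨hAVj, hA0j, hA1j, hA2j⟩ := hsk
    have hPj : P j := by
      intro t ht1 ht2
      have ht0 : 0 ≤ t := by omega
      have hcast : ((t.toNat : ℕ) : ℤ) = t := Int.toNat_of_nonneg ht0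
      have := hA1j ⟨t.toNat, by omega⟩ (by show n - k ≤ t.toNat; omega)
      have h2 : 0 < fext c g ((((⟨t.toNat, by omega⟩ : Fin (n + 1)) : ℕ) : ℤ) + j) := this
      rw [hcast] at h2
      exact h2
    have hle : j ≤ J := hJmax j hPj
    by_contra hne'
    have hlt : j < J := by omega
    set d : ℤ := J - j with hdd
    set r : ℤ := (d - 1) % ((n : ℤ) + 1) with hrr
    set q : ℤ := (d - 1) / ((n : ℤ) + 1) with hqq
    have hr0 : 0 ≤ r := Int.emod_nonneg _ (by positivity)
    have hrn : r ≤ n := by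
      have := Int.emod_lt_of_pos (d - 1) (show (0 : ℤ) < (n : ℤ) + 1 by positivity)
      omega
    have hq0 : 0 ≤ q := Int.ediv_nonneg (by omega) (by positivity)
    have hd : d = r + 1 + q * ((n : ℤ) + 1) := by
      have h5 := Int.emod_add_mul_ediv (d - 1) ((n : ℤ) + 1)
      rw [← hrr, ← hqq] at h5
      linarith [h5, mul_comm ((n : ℤ) + 1) q]
    have hwin : ∀ v : ℤ, r - k ≤ v → v ≤ r → c < fext c g (v + j) := by
      intro v hv1 hv2
      have h1 := hPJ (v + n - r) (by omega) (by omega)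
      have e1 : (v + n - r) + J = (((v + j) + ((n : ℤ) + 1)) + q * ((n : ℤ) + 1)) := by
        have hJd : J = j + d := by omega
        rw [hJd, hd]
        ring
      rw [e1, fext_shift, fext_period] at h1
      have hqc : 0 ≤ (q : ℝ) * c := mul_nonneg (by exact_mod_cast hq0) hc.le
      linarith
    rcases lt_or_ge r (k : ℤ) with hrk | hrk
    · have hw := hwin 0 (by omega) (by omega)
      rw [zero_add] at hw
      have h0 : fext c g (((0 : Fin (n + 1)) : ℤ) + j) ≤ c := hA0j
      have e : ((0 : Fin (n + 1)) : ℤ) + j = j := by simp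
      rw [e] at h0
      linarith
    · apply hA2j
      refine ⟨r.toNat - k, by omega, ?_⟩
      intro i hi1 hi2
      exact hwin (i : ℤ) (by omega) (by omega)
  constructor
  · refine ⟨fun i : Fin (n + 1) => fext c g ((i : ℤ) + J),
      ⟨hmemS, ⟨J, (cycIter_eq c g J).symm⟩, hskel⟩, ?_⟩
    rintro y ⟨hymem, ⟨j, rfl⟩, hysk⟩
    rw [cycIter_eq c g j] at hysk ⊢
    rw [huniq j hysk]
  · rintro h hhmem ⟨j, rfl⟩ hhsk
    rw [cycIter_eq c g j] at hhsk hhmem ⊢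
    have hjJ := huniq j hhsk
    rw [hjJ]
    constructor
    · exact posStat_gt k hk _ hA1
    · rintro h' h'mem ⟨j', rfl⟩ hpos'
      rw [cycIter_eq c g j'] at hpos' ⊢
      have hP' : P j' := by
        have hp := posStat_prop k hk _ hpos'
        intro t ht1 ht2
        have ht0 : 0 ≤ t := by omega
        have hcast : ((t.toNat : ℕ) : ℤ) = t := Int.toNat_of_nonneg ht0
        have := hp ⟨t.toNat, by omega⟩ (by show n - k ≤ t.toNat; omega)
        have h2 : 0 < fext c g ((((⟨t.toNat, by omega⟩ : Fin (n + 1)) : ℕ) : ℤ) + j') := this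
        rw [hcast] at h2
        exact h2
      have hle : j' ≤ J := hJmax j' hP'
      rw [sum_shift_eq, sum_shift_eq]
      exact sumF_le c hc g J j' hle
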